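/- arXiv:2002.09108 — 4 statements merged into one kernel-verified Lean document; each statement's English description precedes it below -/
import Mathlib

section
/- Fix γ > 0 and δ ∈ (0, γ). Define u'(c) = c^{−γ} exp(δ ∫_0^c (sin t)/t dt) for c > 0. Then u' is strictly positive, strictly decreasing (i.e., its log-derivative equals −(γ − δ sin c)/c < 0), u' is regularly varying at infinity with index −γ, but −c·(u')'(c)/u'(c) = γ − δ sin c does not converge as c → ∞. -/
open Filter

lemma sin_div_intble (a b : ℝ) :
    IntervalIntegrable (fun t => Real.sin t / t) MeasureTheory.volume a b := by
  apply (intervalIntegrable_const (c := (1:ℝ))).mono_fun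
  · exact (Real.measurable_sin.div measurable_id).aestronglyMeasurable
  · refine MeasureTheory.ae_of_all _ fun t => ?_
    simp only [Real.norm_eq_abs, abs_one]
    rcases eq_or_ne t 0 with rfl | ht
    · simp
    · rw [abs_div, div_le_one (abs_pos.mpr ht)]
      exact Real.abs_sin_le_abs

lemma cos_div_sq_intble {a b : ℝ} (ha : 0 < a) (hab : a ≤ b) :
    IntervalIntegrable (fun t => Real.cos t / t ^ 2) MeasureTheory.volume a b := by
  apply ContinuousOn.intervalIntegrable
  apply ContinuousOn.div Real.continuousOn_cos (by fun_prop)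
  intro t ht
  rw [Set.uIcc_of_le hab] at ht
  have : 0 < t := lt_of_lt_of_le ha ht.1
  positivity

lemma sin_div_bound {a b : ℝ} (ha : 0 < a) (hab : a ≤ b) :
    |∫ t in a..b, Real.sin t / t| ≤ 2 / a := by
  have hb : 0 < b := lt_of_lt_of_le ha hab
  have hderiv : ∀ t ∈ Set.uIcc a b,
      HasDerivAt (fun t => -Real.cos t / t)
        (Real.sin t / t + Real.cos t / t ^ 2) t := by
    intro t ht
    rw [Set.uIcc_of_le hab] at ht
    have htpos : 0 < t := lt_of_lt_of_le ha ht.1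
    have h1 : HasDerivAt (fun t : ℝ => -Real.cos t) (Real.sin t) t := by
      have := (Real.hasDerivAt_cos t).neg; rw [neg_neg] at this; exact this
    have h2 : HasDerivAt (fun t : ℝ => t⁻¹) (-(t ^ 2)⁻¹) t :=
      hasDerivAt_inv htpos.ne'
    have := h1.mul h2
    convert this using 1
    · rfl
    · rfl
    · funext x; exact div_eq_mul_inv _ _
    field_simp
  have hint : (∫ t in a..b, (Real.sin t / t + Real.cos t / t ^ 2)) =
      -Real.cos b / b - -Real.cos a / a :=
    intervalIntegral.integral_eq_sub_of_hasDerivAt hderiv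
      ((sin_div_intble a b).add (cos_div_sq_intble ha hab))
  have hsplit : (∫ t in a..b, (Real.sin t / t + Real.cos t / t ^ 2)) =
      (∫ t in a..b, Real.sin t / t) + ∫ t in a..b, Real.cos t / t ^ 2 :=
    intervalIntegral.integral_add (sin_div_intble a b) (cos_div_sq_intble ha hab)
  have hval : (∫ t in a..b, Real.sin t / t) =
      (-Real.cos b / b - -Real.cos a / a) - ∫ t in a..b, Real.cos t / t ^ 2 := by
    rw [← hint, hsplit]; ring
  have hbound2 : |∫ t in a..b, Real.cos t / t ^ 2| ≤ 1 / a - 1 / b := by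
    have h2 : (∫ t in a..b, (t : ℝ) ^ (-2 : ℤ)) = 1 / a - 1 / b := by
      rw [integral_zpow]
      · norm_num
        ring
      · right
        constructor
        · decide
        · rw [Set.uIcc_of_le hab]
          intro h
          exact absurd h.1 (by linarith)
    calc |∫ t in a..b, Real.cos t / t ^ 2| ≤ ∫ t in a..b, (t : ℝ) ^ (-2 : ℤ) := by
          apply intervalIntegral.abs_integral_le_integral_abs hab |>.trans
          apply intervalIntegral.integral_mono_on hab
            ((cos_div_sq_intble ha hab).abs)
          · apply ContinuousOn.intervalIntegrable
            intro t ht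
            rw [Set.uIcc_of_le hab] at ht
            have : 0 < t := lt_of_lt_of_le ha ht.1
            exact (continuousAt_zpow₀ t (-2) (Or.inl this.ne')).continuousWithinAt
          · intro t ht
            have htpos : 0 < t := lt_of_lt_of_le ha ht.1
            rw [abs_div, zpow_neg, ← one_div]
            rw [div_le_div_iff₀ (by positivity) (by positivity)]
            have : |Real.cos t| ≤ 1 := Real.abs_cos_le_one t
            have h2 : |t ^ 2| = t ^ 2 := abs_of_pos (by positivity)
            rw [h2, zpow_two]
            nlinarith [sq_nonneg t, Real.abs_cos_le_one t]
      _ = 1 / a - 1 / b := h2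
  rw [hval]
  have hca : |(-Real.cos a / a)| ≤ 1 / a := by
    rw [abs_div, abs_neg, abs_of_pos ha]
    gcongr
    exact Real.abs_cos_le_one a
  have hcb : |(-Real.cos b / b)| ≤ 1 / b := by
    rw [abs_div, abs_neg, abs_of_pos hb]
    gcongr
    exact Real.abs_cos_le_one b
  have h1b : (0:ℝ) < 1 / b := by positivity
  calc |(-Real.cos b / b - -Real.cos a / a) - ∫ t in a..b, Real.cos t / t ^ 2|
      ≤ |(-Real.cos b / b)| + |(-Real.cos a / a)| + |∫ t in a..b, Real.cos t / t ^ 2| := by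
        apply (abs_sub _ _).trans; gcongr; exact abs_sub _ _
    _ ≤ 1 / b + 1 / a + (1 / a - 1 / b) := by gcongr
    _ = 2 / a := by ring

/-- The marginal utility `u'(c) = c^{-γ} exp(δ ∫_0^c sin t / t dt)` is
positive, strictly decreasing with log-derivative `-(γ - δ sin c)/c < 0`,
regularly varying at infinity with index `-γ`, yet its local relative risk
aversion `γ - δ sin c` does not converge as `c → ∞`. -/
theorem RV_not_aCRRA (γ δ : ℝ) (hγ : 0 < δ) (hδ : δ < γ) :
    let u' : ℝ → ℝ := fun c =>
      c ^ (-γ) * Real.exp (δ * ∫ t in (0 : ℝ)..c, Real.sin t / t)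
    (∀ c : ℝ, 0 < c → 0 < u' c) ∧
    StrictAntiOn u' (Set.Ioi (0 : ℝ)) ∧
    (∀ c : ℝ, 0 < c →
      HasDerivAt u' (u' c * (-(γ - δ * Real.sin c) / c)) c ∧
      -(γ - δ * Real.sin c) / c < 0) ∧
    (∀ l : ℝ, 0 < l →
      Tendsto (fun c : ℝ => u' (l * c) / u' c) atTop (nhds (l ^ (-γ)))) ∧
    ¬ ∃ L : ℝ, Tendsto (fun c : ℝ => γ - δ * Real.sin c) atTop (nhds L) := by
  intro u'
  have hpos : ∀ c : ℝ, 0 < c → 0 < u' c := fun c hc =>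
    mul_pos (Real.rpow_pos_of_pos hc _) (Real.exp_pos _)
  have hderiv : ∀ c : ℝ, 0 < c →
      HasDerivAt u' (u' c * (-(γ - δ * Real.sin c) / c)) c := by
    intro c hc
    have hF : HasDerivAt (fun x => ∫ t in (0:ℝ)..x, Real.sin t / t)
        (Real.sin c / c) c := by
      apply intervalIntegral.integral_hasDerivAt_right (sin_div_intble 0 c)
      · exact (Real.measurable_sin.div
          measurable_id).stronglyMeasurable.stronglyMeasurableAtFilter
      · exact (Real.continuous_sin.continuousAt).div continuousAt_id hc.ne'
    have hexp : HasDerivAt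
        (fun x => Real.exp (δ * ∫ t in (0:ℝ)..x, Real.sin t / t))
        (Real.exp (δ * ∫ t in (0:ℝ)..c, Real.sin t / t) * (δ * (Real.sin c / c))) c :=
      (hF.const_mul δ).exp
    have hp : HasDerivAt (fun x : ℝ => x ^ (-γ)) (-γ * c ^ (-γ - 1)) c :=
      Real.hasDerivAt_rpow_const (Or.inl hc.ne')
    have := hp.mul hexp
    convert this using 1
    · rfl
    · rfl
    · rfl
    rw [Real.rpow_sub_one hc.ne']
    simp only [u']
    field_simp
    ring
  have hneg : ∀ c : ℝ, 0 < c → -(γ - δ * Real.sin c) / c < 0 := by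
    intro c hc
    apply div_neg_of_neg_of_pos _ hc
    have := Real.neg_one_le_sin c
    have := Real.sin_le_one c
    nlinarith
  refine ⟨hpos, ?_, fun c hc => ⟨hderiv c hc, hneg c hc⟩, ?_, ?_⟩
  · -- StrictAntiOn
    apply strictAntiOn_of_deriv_neg (convex_Ioi 0)
    · intro c hc
      exact (hderiv c hc).continuousAt.continuousWithinAt
    · intro c hc
      rw [interior_Ioi] at hc
      rw [(hderiv c hc).deriv]
      exact mul_neg_of_pos_of_neg (hpos c hc) (hneg c hc)
  · -- regular variation
    intro l hl
    have key : Tendsto (fun c : ℝ => ∫ t in c..(l*c), Real.sin t / t)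
        atTop (nhds 0) := by
      apply squeeze_zero_norm' (a := fun c => 2 / (min l 1 * c))
      · filter_upwards [eventually_gt_atTop (0:ℝ)] with c hc
        rcases le_total 1 l with h1 | h1
        · have := sin_div_bound hc (le_mul_of_one_le_left hc.le h1)
          rw [Real.norm_eq_abs]
          refine this.trans ?_
          rw [min_eq_right h1, one_mul]
        · have hlc : 0 < l * c := mul_pos hl hc
          have hle : |∫ t in (l*c)..c, Real.sin t / t| ≤ 2 / (l * c) :=
            sin_div_bound hlc (mul_le_of_le_one_left hc.le h1)
          rw [Real.norm_eq_abs,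
            show (∫ t in c..(l*c), Real.sin t / t) =
              -∫ t in (l*c)..c, Real.sin t / t from
              intervalIntegral.integral_symm _ _, abs_neg]
          refine hle.trans ?_
          rw [min_eq_left h1]
      · have : Tendsto (fun c : ℝ => min l 1 * c) atTop atTop :=
          tendsto_atTop_atTop_of_monotone' (fun x y hxy => by
            have : 0 < min l 1 := lt_min hl one_pos
            nlinarith) (by
            intro ⟨B, hB⟩
            have h0 : 0 < min l 1 := lt_min hl one_pos
            have := hB (Set.mem_range_self ((B+1)/min l 1 + 1))
            rw [mul_add, mul_one, mul_div_cancel₀ _ h0.ne'] at this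
            nlinarith)
        simpa using (tendsto_const_nhds.div_atTop this : Tendsto (fun c => (2:ℝ) / (min l 1 * c)) atTop (nhds 0))
    have heq : ∀ᶠ c : ℝ in atTop, u' (l * c) / u' c =
        l ^ (-γ) * Real.exp (δ * ∫ t in c..(l*c), Real.sin t / t) := by
      filter_upwards [eventually_gt_atTop (0:ℝ)] with c hc
      have hlc : 0 < l * c := mul_pos hl hc
      have hadd : (∫ t in (0:ℝ)..c, Real.sin t / t) +
          (∫ t in c..(l*c), Real.sin t / t) = ∫ t in (0:ℝ)..(l*c), Real.sin t / t :=
        intervalIntegral.integral_add_adjacent_intervals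
          (sin_div_intble 0 c) (sin_div_intble c (l*c))
      simp only [u']
      rw [Real.mul_rpow hl.le hc.le, ← hadd, mul_add, Real.exp_add]
      rw [div_eq_iff (ne_of_gt (mul_pos (Real.rpow_pos_of_pos hc _) (Real.exp_pos _)))]
      ring
    rw [tendsto_congr' heq]
    have : Tendsto (fun c : ℝ =>
        Real.exp (δ * ∫ t in c..(l*c), Real.sin t / t)) atTop (nhds 1) := by
      have := (key.const_mul δ).comp tendsto_id
      have h := (Real.continuous_exp.continuousAt.tendsto.comp
        ((key.const_mul δ)) : Tendsto _ atTop (nhds (Real.exp (δ * 0))))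
      rw [mul_zero, Real.exp_zero] at h; exact h
    simpa using tendsto_const_nhds.mul this
  · -- no convergence
    rintro ⟨L, hL⟩
    have hsin : Tendsto (fun c : ℝ => Real.sin c) atTop (nhds ((γ - L) / δ)) := by
      have : Tendsto (fun c : ℝ => (γ - (γ - δ * Real.sin c)) / δ) atTop
          (nhds ((γ - L) / δ)) := ((tendsto_const_nhds.sub hL).div_const δ)
      convert this using 2 with c
      field_simp
      ring
    have hseq1 : Tendsto (fun n : ℕ => (Real.pi / 2 + 2 * Real.pi * n : ℝ))
        atTop atTop := by
      apply tendsto_atTop_add_const_left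
      apply Tendsto.const_mul_atTop (by positivity)
      exact tendsto_natCast_atTop_atTop
    have hseq2 : Tendsto (fun n : ℕ => (-(Real.pi / 2) + 2 * Real.pi * n : ℝ))
        atTop atTop := by
      apply tendsto_atTop_add_const_left
      apply Tendsto.const_mul_atTop (by positivity)
      exact tendsto_natCast_atTop_atTop
    have h1 : Tendsto (fun n : ℕ =>
        Real.sin (Real.pi / 2 + 2 * Real.pi * n)) atTop (nhds ((γ - L) / δ)) :=
      hsin.comp hseq1
    have h2 : Tendsto (fun n : ℕ =>
        Real.sin (-(Real.pi / 2) + 2 * Real.pi * n)) atTop (nhds ((γ - L) / δ)) :=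
      hsin.comp hseq2
    have e1 : ∀ n : ℕ, Real.sin (Real.pi / 2 + 2 * Real.pi * n) = 1 := by
      intro n
      rw [show (Real.pi / 2 + 2 * Real.pi * n : ℝ) = Real.pi / 2 + n * (2 * Real.pi) by ring,
        Real.sin_add_nat_mul_two_pi, Real.sin_pi_div_two]
    have e2 : ∀ n : ℕ, Real.sin (-(Real.pi / 2) + 2 * Real.pi * n) = -1 := by
      intro n
      rw [show (-(Real.pi / 2) + 2 * Real.pi * n : ℝ) = -(Real.pi / 2) + n * (2 * Real.pi) by ring,
        Real.sin_add_nat_mul_two_pi]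
      simp
    simp only [e1] at h1
    simp only [e2] at h2
    have := tendsto_nhds_unique (tendsto_const_nhds.congr fun n => rfl) h1
    have h1' : (1:ℝ) = (γ - L)/δ := tendsto_nhds_unique tendsto_const_nhds h1
    have h2' : (-1:ℝ) = (γ - L)/δ := tendsto_nhds_unique tendsto_const_nhds h2
    linarith [h1'.trans h2'.symm]
end

section
/- Let K be a Z × Z nonnegative matrix, γ > 0, φ(t) = (1 + t^{1/γ})^γ, and F: ℝ_+^Z → ℝ_+^Z defined by Fx = φ(Kx) applied entrywise. If F has a fixed point x* ∈ ℝ_+^Z, then the spectral radius of K is strictly less than 1. -/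
/-- The spectral radius of a real square matrix: the supremum of the absolute
values of its complex eigenvalues (roots of the characteristic polynomial). -/
noncomputable def specRad {Z : ℕ} (K : Matrix (Fin Z) (Fin Z) ℝ) : ℝ :=
  sSup ((fun μ : ℂ => ‖μ‖) '' {μ : ℂ | ((K.map (algebraMap ℝ ℂ)).charpoly).IsRoot μ})

/-- If `Fx = φ(Kx)` with `φ(t) = (1 + t^{1/γ})^γ` has a nonnegative fixed
point, then the spectral radius of the nonnegative matrix `K` is less than 1. -/
theorem fixedPoint_implies_specRad_lt_one {Z : ℕ} (hZ : 0 < Z)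
    (K : Matrix (Fin Z) (Fin Z) ℝ) (hK : ∀ i j, 0 ≤ K i j)
    (γ : ℝ) (hγ : 0 < γ)
    (x : Fin Z → ℝ) (hx : ∀ z, 0 ≤ x z)
    (hfix : ∀ z, x z = (1 + (K.mulVec x z) ^ (1 / γ)) ^ γ) :
    specRad K < 1 := by
  have h0 : ∀ z, (0:ℝ) ≤ K.mulVec x z := by
    intro z
    unfold Matrix.mulVec dotProduct
    exact Finset.sum_nonneg fun j _ => mul_nonneg (hK z j) (hx j)
  have hx1 : ∀ z, 1 ≤ x z := by
    intro z
    rw [hfix z]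
    have h1 : (0:ℝ) ≤ (K.mulVec x z) ^ (1/γ) := Real.rpow_nonneg (h0 z) _
    calc (1:ℝ) = 1 ^ γ := (Real.one_rpow γ).symm
    _ ≤ (1 + (K.mulVec x z)^(1/γ)) ^ γ := Real.rpow_le_rpow zero_le_one (by linarith) hγ.le
  have hxpos : ∀ z, 0 < x z := fun z => lt_of_lt_of_le one_pos (hx1 z)
  have hKx : ∀ z, K.mulVec x z < x z := by
    intro z
    conv_rhs => rw [hfix z]
    calc K.mulVec x z = ((K.mulVec x z) ^ (1/γ)) ^ γ := by
          rw [← Real.rpow_mul (h0 z), one_div, inv_mul_cancel₀ hγ.ne', Real.rpow_one]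
    _ < (1 + (K.mulVec x z) ^ (1/γ)) ^ γ :=
          Real.rpow_lt_rpow (Real.rpow_nonneg (h0 z) _) (by linarith) hγ
  have hne : (Finset.univ : Finset (Fin Z)).Nonempty := ⟨⟨0, hZ⟩, Finset.mem_univ _⟩
  set r : ℝ := Finset.univ.sup' hne (fun z => K.mulVec x z / x z) with hrdef
  have hr1 : r < 1 := by
    rw [hrdef, Finset.sup'_lt_iff]
    exact fun z _ => (div_lt_one (hxpos z)).mpr (hKx z)
  have hr0 : 0 ≤ r := by
    refine le_trans (div_nonneg (h0 ⟨0, hZ⟩) (hxpos ⟨0, hZ⟩).le) ?_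
    exact Finset.le_sup' (f := fun z => K.mulVec x z / x z) (Finset.mem_univ _)
  have hrK : ∀ z, K.mulVec x z ≤ r * x z := by
    intro z
    have h := Finset.le_sup' (f := fun z => K.mulVec x z / x z) (b := z) (Finset.mem_univ z)
    exact (div_le_iff₀ (hxpos z)).mp h
  have key : ∀ μ : ℂ, ((K.map (algebraMap ℝ ℂ)).charpoly).IsRoot μ → ‖μ‖ ≤ r := by
    intro μ hμ
    have hdet : (Matrix.diagonal (fun _ : Fin Z => μ) - K.map (algebraMap ℝ ℂ)).det = 0 := by
      rw [Polynomial.IsRoot, Matrix.charpoly] at hμ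
      rw [← hμ, ← Polynomial.coe_evalRingHom, RingHom.map_det]
      congr 1
      ext i j
      by_cases h : i = j <;>
        simp [Matrix.charmatrix_apply, Matrix.diagonal_apply, h]
    obtain ⟨v, hv0, hv⟩ := Matrix.exists_mulVec_eq_zero_iff.mpr hdet
    have heig : ∀ i, μ * v i = ∑ j, (algebraMap ℝ ℂ) (K i j) * v j := by
      intro i
      have h : ((Matrix.diagonal fun _ : Fin Z => μ).mulVec v
          - (K.map (algebraMap ℝ ℂ)).mulVec v) i = 0 := by
        rw [← Matrix.sub_mulVec, hv]; rfl
      simp only [Pi.sub_apply, Matrix.mulVec_diagonal, sub_eq_zero] at h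
      rw [h]; rfl
    set c : ℝ := Finset.univ.sup' hne (fun i => ‖v i‖ / x i) with hcdef
    obtain ⟨i0, _, hi0⟩ := Finset.exists_mem_eq_sup' hne (fun i => ‖v i‖ / x i)
    have hcle : ∀ j, ‖v j‖ ≤ c * x j := fun j =>
      (div_le_iff₀ (hxpos j)).mp
        (Finset.le_sup' (f := fun i => ‖v i‖ / x i) (Finset.mem_univ j))
    have hcpos : 0 < c := by
      obtain ⟨j, hj⟩ : ∃ j, v j ≠ 0 := Function.ne_iff.mp hv0
      have hpos : 0 < ‖v j‖ / x j :=
        div_pos (by simpa using hj) (hxpos j)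
      exact lt_of_lt_of_le hpos
        (Finset.le_sup' (f := fun i => ‖v i‖ / x i) (Finset.mem_univ j))
    have hvi0 : ‖v i0‖ = c * x i0 := by
      have := hi0.symm
      rw [div_eq_iff (hxpos i0).ne'] at this
      rw [this, mul_comm]
    have h1 : ‖μ‖ * (c * x i0) ≤ ∑ j, K i0 j * ‖v j‖ := by
      rw [← hvi0, ← norm_mul, heig i0]
      calc ‖∑ j, algebraMap ℝ ℂ (K i0 j) * v j‖
          ≤ ∑ j, ‖algebraMap ℝ ℂ (K i0 j) * v j‖ := norm_sum_le _ _
        _ = ∑ j, K i0 j * ‖v j‖ := by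
            refine Finset.sum_congr rfl fun j _ => ?_
            rw [norm_mul]
            congr 1
            simpa using abs_of_nonneg (hK i0 j)
    have h2 : ∑ j, K i0 j * ‖v j‖ ≤ c * (K.mulVec x i0) := by
      have : K.mulVec x i0 = ∑ j, K i0 j * x j := rfl
      rw [this, Finset.mul_sum]
      refine Finset.sum_le_sum fun j _ => ?_
      calc K i0 j * ‖v j‖ ≤ K i0 j * (c * x j) :=
            mul_le_mul_of_nonneg_left (hcle j) (hK i0 j)
        _ = c * (K i0 j * x j) := by ring
    have h3 : c * K.mulVec x i0 ≤ c * (r * x i0) :=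
      mul_le_mul_of_nonneg_left (hrK i0) hcpos.le
    have hfin : ‖μ‖ * (c * x i0) ≤ c * (r * x i0) :=
      le_trans h1 (le_trans h2 h3)
    have hpos : 0 < c * x i0 := mul_pos hcpos (hxpos i0)
    nlinarith [hpos]
  have hle : specRad K ≤ r := by
    apply Real.sSup_le _ hr0
    rintro t ⟨μ, hμ, rfl⟩
    exact key μ hμ
  linarith
end

section
/- Let K be a Z × Z nonnegative irreducible matrix with spectral radius r(K) ≥ 1, γ > 0, φ(t) = (1 + t^{1/γ})^γ, and F: ℝ_+^Z → ℝ_+^Z given by Fx = φ(Kx) entrywise. Then for any starting point x_0 ∈ ℝ_+^Z, the iterates x_n = F x_{n−1} satisfy x_n(z) → ∞ as n → ∞ for every coordinate z. -/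
open Filter

/-- If `K x < x` entrywise for some entrywise-positive vector `x`, then every root of the
characteristic polynomial of (the complexification of) `K` has absolute value `< 1`, hence
the spectral radius is `< 1`. -/
lemma specRad_lt_one_of_mulVec_lt {Z : ℕ} (hZ : 0 < Z)
    (K : Matrix (Fin Z) (Fin Z) ℝ) (hK : ∀ i j, 0 ≤ K i j)
    (v : Fin Z → ℝ) (hv : ∀ z, 0 < v z) (hKv : ∀ z, K.mulVec v z < v z) :
    specRad K < 1 := by
  haveI : NeZero Z := ⟨hZ.ne'⟩
  set Kc : Matrix (Fin Z) (Fin Z) ℂ := K.map (algebraMap ℝ ℂ) with hKc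
  -- every root of the char. polynomial has absolute value < 1
  have hroot : ∀ μ : ℂ, (Kc.charpoly).IsRoot μ → ‖μ‖ < 1 := by
    intro μ hμ
    -- extract an eigenvector
    have hdet : (μ • (1 : Matrix (Fin Z) (Fin Z) ℂ) - Kc).det = 0 := by
      have h := hμ
      rw [Polynomial.IsRoot, Matrix.charpoly, ← Polynomial.coe_evalRingHom,
        RingHom.map_det] at h
      convert h using 2
      ext i j
      rcases eq_or_ne i j with rfl | hij
      · simp [Matrix.charmatrix_apply_eq, Matrix.one_apply_eq]
      · simp [Matrix.charmatrix_apply_ne _ _ _ hij, Matrix.one_apply_ne hij]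
    obtain ⟨w, hw0, hww⟩ := Matrix.exists_mulVec_eq_zero_iff.mpr hdet
    have heig : ∀ i, Kc.mulVec w i = μ * w i := by
      intro i
      have h := congrFun hww i
      rw [Matrix.sub_mulVec, Matrix.smul_mulVec, Matrix.one_mulVec] at h
      have h2 : μ * w i - Kc.mulVec w i = 0 := h
      exact (sub_eq_zero.mp h2).symm
    -- pass to absolute values
    set g : Fin Z → ℝ := fun j => ‖w j‖ with hg
    obtain ⟨j0, hj0⟩ : ∃ j0, w j0 ≠ 0 := Function.ne_iff.mp hw0
    have hgj0 : 0 < g j0 := by simpa [hg] using hj0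
    -- maximizer of g j / v j
    obtain ⟨i0, -, hi0⟩ := Finset.exists_max_image Finset.univ (fun j => g j / v j)
      ⟨j0, Finset.mem_univ j0⟩
    set t : ℝ := g i0 / v i0 with ht
    have htpos : 0 < t := lt_of_lt_of_le (div_pos hgj0 (hv j0)) (hi0 j0 (Finset.mem_univ j0))
    have hgle : ∀ j, g j ≤ t * v j := fun j =>
      (div_le_iff₀ (hv j)).mp (hi0 j (Finset.mem_univ j))
    have hgi0 : g i0 = t * v i0 := by
      rw [ht, div_mul_cancel₀ _ (hv i0).ne']
    -- the key estimate
    have hKcg : ‖μ‖ * g i0 ≤ ∑ j, K i0 j * g j := by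
      calc ‖μ‖ * g i0 = ‖μ * w i0‖ := by simp [hg]
        _ = ‖Kc.mulVec w i0‖ := by rw [heig]
        _ = ‖∑ j, Kc i0 j * w j‖ := by
            congr 1
        _ ≤ ∑ j, ‖Kc i0 j * w j‖ := norm_sum_le _ _
        _ = ∑ j, K i0 j * g j := by
            refine Finset.sum_congr rfl fun j _ => ?_
            simp [hKc, hg, map_mul, Complex.norm_real, abs_of_nonneg (hK i0 j)]
    have hsum : ∑ j, K i0 j * g j ≤ t * K.mulVec v i0 := by
      rw [Matrix.mulVec, dotProduct, Finset.mul_sum]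
      refine Finset.sum_le_sum fun j _ => ?_
      calc K i0 j * g j ≤ K i0 j * (t * v j) :=
            mul_le_mul_of_nonneg_left (hgle j) (hK i0 j)
        _ = t * (K i0 j * v j) := by ring
    have hfinal : ‖μ‖ * (t * v i0) < t * v i0 := by
      calc ‖μ‖ * (t * v i0) = ‖μ‖ * g i0 := by rw [hgi0]
        _ ≤ ∑ j, K i0 j * g j := hKcg
        _ ≤ t * K.mulVec v i0 := hsum
        _ < t * v i0 := by exact (mul_lt_mul_iff_right₀ htpos).mpr (hKv i0)
    exact (mul_lt_iff_lt_one_left (mul_pos htpos (hv i0))).mp hfinal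
  -- the sup over roots is attained, hence < 1
  have hne : {μ : ℂ | (Kc.charpoly).IsRoot μ}.Nonempty := by
    have hdeg : 0 < (Kc.charpoly).degree := by
      rw [Matrix.charpoly_degree_eq_dim]
      simp only [Fintype.card_fin]
      exact_mod_cast hZ
    obtain ⟨μ, hμ⟩ := Complex.exists_root hdeg
    exact ⟨μ, hμ⟩
  have hfin : {μ : ℂ | (Kc.charpoly).IsRoot μ}.Finite :=
    Polynomial.finite_setOf_isRoot (Kc.charpoly_monic.ne_zero)
  have hmem : specRad K ∈ (fun μ : ℂ => ‖μ‖) '' {μ : ℂ | (Kc.charpoly).IsRoot μ} :=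
    Set.Nonempty.csSup_mem (hne.image _) (hfin.image _)
  obtain ⟨μ, hμ, hμ2⟩ := hmem
  rw [specRad, ← hKc] at *
  rw [← hμ2]
  exact hroot μ hμ

/-- If `K` is nonnegative, irreducible, and `r(K) ≥ 1`, then the iterates of
`Fx = φ(Kx)` diverge to infinity in every coordinate. -/
theorem iterates_diverge_of_specRad_ge_one {Z : ℕ} (hZ : 0 < Z)
    (K : Matrix (Fin Z) (Fin Z) ℝ) (hK : ∀ i j, 0 ≤ K i j)
    (hirr : ∀ i j : Fin Z, ∃ m : ℕ, 0 < (K ^ m) i j)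
    (hr : 1 ≤ specRad K)
    (γ : ℝ) (hγ : 0 < γ)
    (x : ℕ → Fin Z → ℝ) (hx0 : ∀ z, 0 ≤ x 0 z)
    (hiter : ∀ n z, x (n + 1) z = (1 + (K.mulVec (x n) z) ^ (1 / γ)) ^ γ) :
    ∀ z, Tendsto (fun n => x n z) atTop atTop := by
  set G : (Fin Z → ℝ) → (Fin Z → ℝ) :=
    fun v z => (1 + (K.mulVec v z) ^ (1 / γ)) ^ γ with hGdef
  set e : ℕ → Fin Z → ℝ := fun n => G^[n] (fun _ => 0) with hedef
  have he_succ : ∀ n, e (n + 1) = G (e n) := fun n =>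
    Function.iterate_succ_apply' G n _
  have hmv_apply : ∀ (v : Fin Z → ℝ) (z : Fin Z), K.mulVec v z = ∑ j, K z j * v j :=
    fun v z => rfl
  have hmv_nonneg : ∀ v : Fin Z → ℝ, (∀ z, 0 ≤ v z) → ∀ z, 0 ≤ K.mulVec v z := by
    intro v hvn z
    rw [hmv_apply]
    exact Finset.sum_nonneg fun j _ => mul_nonneg (hK z j) (hvn j)
  have hmv_mono : ∀ v w : Fin Z → ℝ, (∀ z, v z ≤ w z) → ∀ z, K.mulVec v z ≤ K.mulVec w z := by
    intro v w hvw z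
    rw [hmv_apply, hmv_apply]
    exact Finset.sum_le_sum fun j _ => mul_le_mul_of_nonneg_left (hvw j) (hK z j)
  have hGone : ∀ v : Fin Z → ℝ, (∀ z, 0 ≤ v z) → ∀ z, 1 ≤ G v z := by
    intro v hvn z
    have h1 : (1 : ℝ) = 1 ^ γ := (Real.one_rpow γ).symm
    rw [h1]
    exact Real.rpow_le_rpow zero_le_one
      (le_add_of_nonneg_right (Real.rpow_nonneg (hmv_nonneg v hvn z) _)) hγ.le
  have hGmono : ∀ v w : Fin Z → ℝ, (∀ z, 0 ≤ v z) → (∀ z, v z ≤ w z) →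
      ∀ z, G v z ≤ G w z := by
    intro v w hvn hvw z
    refine Real.rpow_le_rpow ?_ ?_ hγ.le
    · have := Real.rpow_nonneg (hmv_nonneg v hvn z) (1 / γ)
      linarith
    · have := Real.rpow_le_rpow (hmv_nonneg v hvn z) (hmv_mono v w hvw z)
        (one_div_pos.mpr hγ).le
      linarith
  have hGge : ∀ v : Fin Z → ℝ, (∀ z, 0 ≤ v z) → ∀ z, K.mulVec v z ≤ G v z := by
    intro v hvn z
    have hs : 0 ≤ K.mulVec v z := hmv_nonneg v hvn z
    have h1 : K.mulVec v z = ((K.mulVec v z) ^ (1 / γ)) ^ γ := by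
      rw [← Real.rpow_mul hs, one_div_mul_cancel hγ.ne', Real.rpow_one]
    calc K.mulVec v z = ((K.mulVec v z) ^ (1 / γ)) ^ γ := h1
      _ ≤ (1 + (K.mulVec v z) ^ (1 / γ)) ^ γ :=
        Real.rpow_le_rpow (Real.rpow_nonneg hs _) (by linarith) hγ.le
  have he_nonneg : ∀ n z, 0 ≤ e n z := by
    intro n
    induction n with
    | zero => intro z; simp [hedef]
    | succ n ih =>
      intro z
      rw [he_succ]
      exact le_trans zero_le_one (hGone _ ih z)
  have he_step : ∀ n z, e n z ≤ e (n + 1) z := by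
    intro n
    induction n with
    | zero =>
      intro z
      have : e 0 z = 0 := by simp [hedef]
      rw [this]
      exact he_nonneg 1 z
    | succ n ih =>
      intro z
      rw [he_succ, he_succ]
      exact hGmono _ _ (he_nonneg n) ih z
  have he_mono : ∀ z, Monotone fun n => e n z := fun z =>
    monotone_nat_of_le_succ fun n => he_step n z
  have hxe : ∀ n z, e n z ≤ x n z := by
    intro n
    induction n with
    | zero => intro z; simpa [hedef] using hx0 z
    | succ n ih =>
      intro z
      rw [he_succ, hiter]
      exact hGmono _ _ (he_nonneg n) ih z
  have hpow : ∀ m n (z j : Fin Z), (K ^ m) z j * e n j ≤ e (n + m) z := by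
    intro m
    induction m with
    | zero =>
      intro n z j
      rcases eq_or_ne z j with rfl | h
      · simp [Matrix.one_apply_eq]
      · rw [pow_zero, Matrix.one_apply_ne h, zero_mul]
        exact he_nonneg n z
    | succ m ih =>
      intro n z j
      have hrw : e (n + (m + 1)) = G (e (n + m)) := by
        rw [show n + (m + 1) = (n + m) + 1 by ring, he_succ]
      calc (K ^ (m + 1)) z j * e n j = (∑ k, K z k * (K ^ m) k j) * e n j := by
            rw [pow_succ', Matrix.mul_apply]
        _ = ∑ k, K z k * ((K ^ m) k j * e n j) := by
            rw [Finset.sum_mul]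
            exact Finset.sum_congr rfl fun k _ => mul_assoc _ _ _
        _ ≤ ∑ k, K z k * e (n + m) k :=
            Finset.sum_le_sum fun k _ => mul_le_mul_of_nonneg_left (ih n k j) (hK z k)
        _ = K.mulVec (e (n + m)) z := (hmv_apply _ _).symm
        _ ≤ G (e (n + m)) z := hGge _ (he_nonneg _) z
        _ = e (n + (m + 1)) z := by rw [hrw]
  by_cases hbdd : ∀ z, BddAbove (Set.range fun n => e n z)
  · -- bounded case: the limit is a fixed point, contradicting `specRad K ≥ 1`
    exfalso
    set l : Fin Z → ℝ := fun z => ⨆ n, e n z with hl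
    have hlim : ∀ z, Tendsto (fun n => e n z) atTop (nhds (l z)) := fun z =>
      tendsto_atTop_ciSup (he_mono z) (hbdd z)
    have hl1 : ∀ z, 1 ≤ l z := by
      intro z
      have h1 : e 1 z = 1 := by
        have h0 : K.mulVec (e 0) z = 0 := by
          rw [hmv_apply]
          have : ∀ j, e 0 j = 0 := fun j => rfl
          simp [this]
        rw [show (1 : ℕ) = 0 + 1 from rfl, he_succ 0]
        show (1 + (K.mulVec (e 0) z) ^ (1 / γ)) ^ γ = 1
        rw [h0, Real.zero_rpow (one_div_ne_zero hγ.ne'), add_zero, Real.one_rpow]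
      calc (1 : ℝ) = e 1 z := h1.symm
        _ ≤ l z := le_ciSup (hbdd z) 1
    have hmvlim : ∀ z, Tendsto (fun n => K.mulVec (e n) z) atTop (nhds (K.mulVec l z)) := by
      intro z
      simp only [hmv_apply]
      exact tendsto_finset_sum _ fun j _ => (hlim j).const_mul (K z j)
    have hfix : ∀ z, l z = (1 + (K.mulVec l z) ^ (1 / γ)) ^ γ := by
      intro z
      have h1 : Tendsto (fun n => e (n + 1) z) atTop (nhds (l z)) :=
        (hlim z).comp (tendsto_add_atTop_nat 1)
      have h2 : Tendsto (fun n => (1 + (K.mulVec (e n) z) ^ (1 / γ)) ^ γ) atTop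
          (nhds ((1 + (K.mulVec l z) ^ (1 / γ)) ^ γ)) := by
        refine Filter.Tendsto.rpow_const ?_ (Or.inr hγ.le)
        exact ((hmvlim z).rpow_const (Or.inr (by positivity))).const_add 1
      have h3 : (fun n => e (n + 1) z) = fun n => (1 + (K.mulVec (e n) z) ^ (1 / γ)) ^ γ := by
        funext n
        rw [he_succ]
      rw [h3] at h1
      exact tendsto_nhds_unique h1 h2
    have hlt : ∀ z, K.mulVec l z < l z := by
      intro z
      have hln : ∀ z', 0 ≤ l z' := fun z' => le_trans zero_le_one (hl1 z')
      have hs : 0 ≤ K.mulVec l z := hmv_nonneg l hln z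
      have hroot : (l z) ^ (1 / γ) = 1 + (K.mulVec l z) ^ (1 / γ) := by
        rw [hfix z, ← Real.rpow_mul (by positivity), mul_one_div_cancel hγ.ne', Real.rpow_one]
      by_contra hcon
      push_neg at hcon
      have := Real.rpow_le_rpow (hln z) hcon (by positivity : (0:ℝ) ≤ 1 / γ)
      rw [hroot] at this
      have hpos : (0:ℝ) < 1 := one_pos
      linarith
    have := specRad_lt_one_of_mulVec_lt hZ K hK l
      (fun z => lt_of_lt_of_le one_pos (hl1 z)) hlt
    linarith
  · -- unbounded case: some coordinate diverges, hence all do by irreducibility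
    push_neg at hbdd
    obtain ⟨z0, hz0⟩ := hbdd
    have hdiv0 : Tendsto (fun n => e n z0) atTop atTop :=
      tendsto_atTop_atTop_of_monotone' (he_mono z0) hz0
    intro z
    obtain ⟨m, hm⟩ := hirr z z0
    have hshift : Tendsto (fun n => e (n + m) z) atTop atTop := by
      refine tendsto_atTop_mono (fun n => hpow m n z z0) ?_
      exact hdiv0.const_mul_atTop hm
    have hez : Tendsto (fun n => e n z) atTop atTop :=
      (tendsto_add_atTop_iff_nat m).mp hshift
    exact tendsto_atTop_mono (fun n => hxe n z) hez
end

section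
/- Let K be a Z × Z nonnegative matrix with spectral radius r(K) < 1, γ > 0, φ(t) = (1 + t^{1/γ})^γ, and F: ℝ_+^Z → ℝ_+^Z given by Fx = φ(Kx) entrywise. Then F has a unique fixed point x* ∈ ℝ_+^Z, and any fixed point satisfies 1 ≤ x* ≤ (I − aK)^{−1} b·1 componentwise, where a ∈ [1, 1/r(K)) and b ≥ 0 are chosen such that φ(t) ≤ at + b for all t ≥ 0. -/
open Matrix Polynomial Filter

namespace FPAux

attribute [local instance] Matrix.linftyOpNormedRing Matrix.linftyOpNormedAlgebra

section Phi
variable {γ : ℝ} (hγ : 0 < γ)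
include hγ

lemma phi_one_le {t : ℝ} (ht : 0 ≤ t) : 1 ≤ (1 + t ^ (1 / γ)) ^ γ := by
  have h0 : (0:ℝ) ≤ t ^ (1/γ) := Real.rpow_nonneg ht _
  calc (1:ℝ) = 1 ^ γ := (Real.one_rpow γ).symm
    _ ≤ (1 + t ^ (1/γ)) ^ γ :=
      Real.rpow_le_rpow zero_le_one (by linarith) hγ.le

lemma phi_mono {s t : ℝ} (hs : 0 ≤ s) (hst : s ≤ t) :
    (1 + s ^ (1 / γ)) ^ γ ≤ (1 + t ^ (1 / γ)) ^ γ := by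
  have h1 : s ^ (1/γ) ≤ t ^ (1/γ) :=
    Real.rpow_le_rpow hs hst (by positivity)
  have h0 : (0:ℝ) ≤ s ^ (1/γ) := Real.rpow_nonneg hs _
  exact Real.rpow_le_rpow (by linarith) (by linarith) hγ.le

lemma phi_subhom {t l : ℝ} (ht : 0 ≤ t) (hl0 : 0 ≤ l) (hl1 : l < 1) :
    l * (1 + t ^ (1 / γ)) ^ γ < (1 + (l * t) ^ (1 / γ)) ^ γ := by
  have hlr : l ^ (1/γ) < 1 := Real.rpow_lt_one hl0 hl1 (by positivity)
  have hlrn : (0:ℝ) ≤ l ^ (1/γ) := Real.rpow_nonneg hl0 _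
  have htn : (0:ℝ) ≤ t ^ (1/γ) := Real.rpow_nonneg ht _
  have hl' : (l ^ (1/γ)) ^ γ = l := by
    rw [← Real.rpow_mul hl0, one_div_mul_cancel hγ.ne', Real.rpow_one]
  have hmul : (l * t) ^ (1/γ) = l ^ (1/γ) * t ^ (1/γ) := Real.mul_rpow hl0 ht
  have key : l ^ (1/γ) * (1 + t ^ (1/γ)) < 1 + (l * t) ^ (1/γ) := by
    rw [hmul]; nlinarith
  calc l * (1 + t ^ (1/γ)) ^ γ
      = (l ^ (1/γ) * (1 + t ^ (1/γ))) ^ γ := by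
        rw [Real.mul_rpow hlrn (by linarith), hl']
    _ < (1 + (l * t) ^ (1/γ)) ^ γ :=
        Real.rpow_lt_rpow (by positivity) key hγ

end Phi

variable {Z : ℕ}

/-! ### Spectral radius facts -/

lemma eval_charpoly (M : Matrix (Fin Z) (Fin Z) ℂ) (μ : ℂ) :
    M.charpoly.eval μ = (μ • (1 : Matrix (Fin Z) (Fin Z) ℂ) - M).det := by
  rw [Matrix.charpoly]
  rw [show (Polynomial.eval μ : ℂ[X] → ℂ) = (Polynomial.evalRingHom μ : ℂ[X] →+* ℂ) from rfl,
    RingHom.map_det]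
  congr 1
  ext i j
  by_cases h : i = j <;>
    simp [charmatrix_apply, Matrix.one_apply, h, Matrix.diagonal_apply]

lemma isRoot_of_mem_spectrum {M : Matrix (Fin Z) (Fin Z) ℂ} {μ : ℂ}
    (h : μ ∈ spectrum ℂ M) : M.charpoly.IsRoot μ := by
  rw [spectrum.mem_iff] at h
  rw [Matrix.isUnit_iff_isUnit_det, isUnit_iff_ne_zero, not_not] at h
  rw [IsRoot, eval_charpoly]
  rwa [Algebra.algebraMap_eq_smul_one] at h

lemma specRad_mem_bddAbove (K : Matrix (Fin Z) (Fin Z) ℝ) :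
    BddAbove ((fun μ : ℂ => ‖μ‖) '' {μ : ℂ | ((K.map (algebraMap ℝ ℂ)).charpoly).IsRoot μ}) := by
  refine Set.Finite.bddAbove (Set.Finite.image _ ?_)
  exact Polynomial.finite_setOf_isRoot (Matrix.charpoly_monic _).ne_zero

lemma specRad_nonneg (hZ : 0 < Z) (K : Matrix (Fin Z) (Fin Z) ℝ) : 0 ≤ specRad K := by
  have hdeg : 0 < ((K.map (algebraMap ℝ ℂ)).charpoly).degree := by
    rw [Polynomial.natDegree_pos_iff_degree_pos.symm, Matrix.charpoly_natDegree_eq_dim]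
    simpa using hZ
  obtain ⟨μ, hμ⟩ := Complex.exists_root hdeg
  exact le_trans (norm_nonneg μ)
    (le_csSup (specRad_mem_bddAbove K) ⟨μ, hμ, rfl⟩)

lemma abs_le_specRad (K : Matrix (Fin Z) (Fin Z) ℝ) {μ : ℂ}
    (h : μ ∈ spectrum ℂ (K.map (algebraMap ℝ ℂ))) : ‖μ‖ ≤ specRad K :=
  le_csSup (specRad_mem_bddAbove K) ⟨μ, isRoot_of_mem_spectrum h, rfl⟩

lemma nnnorm_map_complex (A : Matrix (Fin Z) (Fin Z) ℝ) :
    ‖A.map (algebraMap ℝ ℂ)‖₊ = ‖A‖₊ := by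
  rw [Matrix.linfty_opNNNorm_def, Matrix.linfty_opNNNorm_def]
  congr 1
  ext i
  congr 1
  ext j
  simp [Matrix.map_apply, Complex.nnnorm_real]

/-- Gelfand's formula: some power has small norm. -/
lemma exists_pow_norm_lt (hZ : 0 < Z) (K : Matrix (Fin Z) (Fin Z) ℝ)
    {c : ℝ} (hc0 : 0 < c) (hc : specRad K < c) :
    ∃ n : ℕ, 0 < n ∧ ‖K ^ n‖ < c ^ n := by
  set K' := K.map (algebraMap ℝ ℂ) with hK'
  have hrad : spectralRadius ℂ K' ≤ ENNReal.ofReal (specRad K) := by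
    rw [spectralRadius]
    refine iSup₂_le fun μ hμ => ?_
    have := abs_le_specRad K hμ
    rw [← ENNReal.ofReal_coe_nnreal]
    exact ENNReal.ofReal_le_ofReal (by simpa using this)
  have hlt : spectralRadius ℂ K' < ENNReal.ofReal c :=
    lt_of_le_of_lt hrad (ENNReal.ofReal_lt_ofReal_iff hc0 |>.mpr hc)
  have htend := spectrum.pow_nnnorm_pow_one_div_tendsto_nhds_spectralRadius K'
  have hev : ∀ᶠ n : ℕ in atTop,
      (‖K' ^ n‖₊ : ENNReal) ^ (1 / (n:ℝ)) < ENNReal.ofReal c :=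
    htend.eventually_lt_const hlt
  obtain ⟨N, hN⟩ := hev.exists_forall_of_atTop
  refine ⟨N + 1, Nat.succ_pos N, ?_⟩
  have h1 := hN (N+1) (Nat.le_succ N)
  set n := N + 1
  have hn : (n:ℝ) ≠ 0 := by positivity
  have h2 : (‖K' ^ n‖₊ : ENNReal) < (ENNReal.ofReal c) ^ (n : ℕ) := by
    have h3 := ENNReal.rpow_lt_rpow h1 (by positivity : (0:ℝ) < (n:ℝ))
    rw [← ENNReal.rpow_mul, one_div_mul_cancel hn, ENNReal.rpow_one] at h3
    rw [← ENNReal.rpow_natCast (ENNReal.ofReal c) n]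
    exact h3
  have hmap : K' ^ n = (K ^ n).map (algebraMap ℝ ℂ) := by
    simp only [hK', ← RingHom.mapMatrix_apply, ← map_pow]
  have hnorm : ‖K ^ n‖ = ‖K' ^ n‖ := by
    rw [hmap]
    exact congrArg NNReal.toReal (nnnorm_map_complex (K ^ n)).symm
  rw [hnorm]
  have h4 : (‖K' ^ n‖₊ : ENNReal) = ENNReal.ofReal ‖K' ^ n‖ :=
    (ofReal_norm _).symm
  rw [h4, ← ENNReal.ofReal_pow hc0.le] at h2
  exact (ENNReal.ofReal_lt_ofReal_iff (by positivity)).mp h2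

/-! ### Inverse of `1 - B` for nonnegative `B` with small power -/

lemma entry_nnnorm_le (A : Matrix (Fin Z) (Fin Z) ℝ) (i j : Fin Z) :
    ‖A i j‖₊ ≤ ‖A‖₊ := by
  rw [Matrix.linfty_opNNNorm_def]
  exact le_trans (Finset.single_le_sum (f := fun k => ‖A i k‖₊)
    (fun k _ => zero_le) (Finset.mem_univ j))
    (Finset.le_sup (f := fun i => ∑ j, ‖A i j‖₊) (Finset.mem_univ i))

lemma entry_continuous (i j : Fin Z) :
    Continuous fun A : Matrix (Fin Z) (Fin Z) ℝ => A i j := by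
  refine (LipschitzWith.of_dist_le_mul fun A B => ?_).continuous (K := 1)
  simp only [NNReal.coe_one, one_mul, dist_eq_norm]
  have := entry_nnnorm_le (A - B) i j
  simpa [Matrix.sub_apply] using (NNReal.coe_le_coe.mpr this : _)

lemma mul_entries_nonneg {A B : Matrix (Fin Z) (Fin Z) ℝ}
    (hA : ∀ i j, 0 ≤ A i j) (hB : ∀ i j, 0 ≤ B i j) : ∀ i j, 0 ≤ (A * B) i j := by
  intro i j
  rw [Matrix.mul_apply]
  exact Finset.sum_nonneg fun k _ => mul_nonneg (hA i k) (hB k j)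

lemma pow_entries_nonneg {A : Matrix (Fin Z) (Fin Z) ℝ}
    (hA : ∀ i j, 0 ≤ A i j) (n : ℕ) : ∀ i j, 0 ≤ (A ^ n) i j := by
  induction n with
  | zero => intro i j; by_cases h : i = j <;> simp [pow_zero, Matrix.one_apply, h]
  | succ n ih =>
      rw [pow_succ]
      exact mul_entries_nonneg ih hA

lemma one_sub_inv (B : Matrix (Fin Z) (Fin Z) ℝ) (hB : ∀ i j, 0 ≤ B i j)
    {n : ℕ} (hnorm : ‖B ^ n‖ < 1) :
    (1 - B) * (1 - B)⁻¹ = 1 ∧ (1 - B)⁻¹ * (1 - B) = 1 ∧ ∀ i j, 0 ≤ (1 - B)⁻¹ i j := by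
  set T : Matrix (Fin Z) (Fin Z) ℝ := ∑' m : ℕ, (B ^ n) ^ m with hTdef
  have hT : (1 - B ^ n) * T = 1 := mul_neg_geom_series _ hnorm
  set S : Matrix (Fin Z) (Fin Z) ℝ := ∑ i ∈ Finset.range n, B ^ i with hSdef
  have hS : (1 - B) * S = 1 - B ^ n := by
    have h1 : S * (B - 1) = B ^ n - 1 := geom_sum_mul B n
    have hc : B * S = S * B := by
      simp only [hSdef, Finset.mul_sum, Finset.sum_mul, ← pow_succ, ← pow_succ']
    have hcomm : (1 - B) * S = S * (1 - B) := by
      rw [sub_mul, mul_sub, one_mul, mul_one, hc]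
    rw [hcomm]
    have := congrArg Neg.neg h1
    simp only [mul_sub, sub_mul, mul_one, one_mul, neg_sub] at this ⊢
    linear_combination (norm := abel) this
  have hright : (1 - B) * (S * T) = 1 := by rw [← mul_assoc, hS, hT]
  have hinv : (1 - B)⁻¹ = S * T := Matrix.inv_eq_right_inv hright
  have hleft : (S * T) * (1 - B) = 1 := mul_eq_one_comm.mp hright
  have hTnn : ∀ i j, 0 ≤ T i j := by
    intro i j
    have hsum : HasSum (fun m : ℕ => (B ^ n) ^ m) T :=
      (summable_geometric_of_norm_lt_one hnorm).hasSum
    let e : Matrix (Fin Z) (Fin Z) ℝ →+ ℝ :=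
      AddMonoidHom.mk' (fun A => A i j) (fun _ _ => rfl)
    have hsum' : HasSum (fun m : ℕ => ((B ^ n) ^ m) i j) (T i j) :=
      hsum.map e (entry_continuous i j)
    exact hasSum_le (fun m => pow_entries_nonneg (pow_entries_nonneg hB n) m i j)
      hasSum_zero hsum'
  have hSnn : ∀ i j, 0 ≤ S i j := by
    intro i j
    rw [hSdef]
    simp only [Matrix.sum_apply]
    exact Finset.sum_nonneg fun k _ => pow_entries_nonneg hB k i j
  refine ⟨?_, ?_, ?_⟩
  · rw [hinv]; exact hright
  · rw [hinv]; exact hleft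
  · rw [hinv]; exact mul_entries_nonneg hSnn hTnn

lemma key_inv (hZ : 0 < Z) (K : Matrix (Fin Z) (Fin Z) ℝ) (hK : ∀ i j, 0 ≤ K i j)
    {a : ℝ} (ha : 0 < a) (har : a * specRad K < 1) :
    (1 - a • K) * (1 - a • K)⁻¹ = 1 ∧ (1 - a • K)⁻¹ * (1 - a • K) = 1 ∧
      ∀ i j, 0 ≤ (1 - a • K)⁻¹ i j := by
  have hr0 : 0 ≤ specRad K := specRad_nonneg hZ K
  have hra : specRad K < 1 / a := by
    rw [lt_div_iff₀ ha]; linarith [har]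
  set c : ℝ := (specRad K + 1 / a) / 2 with hcdef
  have hc0 : 0 < c := by positivity
  have hc : specRad K < c := by rw [hcdef]; linarith
  have hainv : a * (1 / a) = 1 := by field_simp
  have hac : a * c < 1 := by rw [hcdef]; nlinarith
  obtain ⟨n, hn, hKn⟩ := exists_pow_norm_lt hZ K hc0 hc
  have hBnn : ∀ i j, 0 ≤ (a • K) i j := fun i j => by
    rw [Matrix.smul_apply, smul_eq_mul]; exact mul_nonneg ha.le (hK i j)
  have hBnorm : ‖(a • K) ^ n‖ < 1 := by
    rw [_root_.smul_pow, norm_smul, Real.norm_eq_abs, abs_of_pos (pow_pos ha n)]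
    calc a ^ n * ‖K ^ n‖ < a ^ n * c ^ n :=
          mul_lt_mul_of_pos_left hKn (pow_pos ha n)
      _ = (a * c) ^ n := (mul_pow a c n).symm
      _ < 1 := pow_lt_one₀ (by positivity) hac hn.ne'
  exact one_sub_inv (a • K) hBnn hBnorm


lemma fixed_le (hZ : 0 < Z) (K : Matrix (Fin Z) (Fin Z) ℝ) (hK : ∀ i j, 0 ≤ K i j)
    {γ : ℝ} (hγ : 0 < γ) {x y : Fin Z → ℝ}
    (hx1 : ∀ z, 1 ≤ x z) (hy1 : ∀ z, 1 ≤ y z)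
    (hxf : ∀ z, x z = (1 + (K.mulVec x z) ^ (1 / γ)) ^ γ)
    (hyf : ∀ z, y z = (1 + (K.mulVec y z) ^ (1 / γ)) ^ γ) :
    ∀ z, x z ≤ y z := by
  by_contra hcon
  push_neg at hcon
  obtain ⟨z1, hz1⟩ := hcon
  obtain ⟨z0, -, hz0⟩ := Finset.exists_min_image Finset.univ (fun z => y z / x z)
    ⟨z1, Finset.mem_univ z1⟩
  set l := y z0 / x z0 with hldef
  have hxpos : ∀ z, 0 < x z := fun z => lt_of_lt_of_le zero_lt_one (hx1 z)
  have hl0 : 0 < l := div_pos (lt_of_lt_of_le zero_lt_one (hy1 z0)) (hxpos z0)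
  have hl1 : l < 1 := lt_of_le_of_lt (hz0 z1 (Finset.mem_univ z1))
    ((div_lt_one (hxpos z1)).mpr hz1)
  have hge : ∀ z, l * x z ≤ y z := fun z => by
    have h := hz0 z (Finset.mem_univ z)
    rwa [le_div_iff₀ (hxpos z)] at h
  have hKnn : ∀ z, 0 ≤ K.mulVec x z := by
    intro z
    simp only [Matrix.mulVec, dotProduct]
    exact Finset.sum_nonneg fun k _ => mul_nonneg (hK z k) (le_trans zero_le_one (hx1 k))
  have hKmono : ∀ z, l * K.mulVec x z ≤ K.mulVec y z := by
    intro z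
    simp only [Matrix.mulVec, dotProduct]
    rw [Finset.mul_sum]
    refine Finset.sum_le_sum fun k _ => ?_
    calc l * (K z k * x k) = K z k * (l * x k) := by ring
      _ ≤ K z k * y k := mul_le_mul_of_nonneg_left (hge k) (hK z k)
  have hkey : ∀ z, l * x z < y z := by
    intro z
    calc l * x z = l * (1 + (K.mulVec x z) ^ (1/γ)) ^ γ := by rw [← hxf z]
      _ < (1 + (l * K.mulVec x z) ^ (1/γ)) ^ γ := phi_subhom hγ (hKnn z) hl0.le hl1
      _ ≤ (1 + (K.mulVec y z) ^ (1/γ)) ^ γ :=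
          phi_mono hγ (mul_nonneg hl0.le (hKnn z)) (hKmono z)
      _ = y z := (hyf z).symm
  have heq : y z0 = l * x z0 := by
    rw [hldef, div_mul_cancel₀ _ (hxpos z0).ne']
  exact absurd (hkey z0) (by rw [← heq]; exact lt_irrefl _)

end FPAux

open FPAux in
/-- If `r(K) < 1` then `Fx = φ(Kx)` has a unique nonnegative fixed point, and
any fixed point `x*` satisfies `1 ≤ x* ≤ (I - aK)⁻¹ b·1` componentwise,
whenever `a ≥ 1`, `a·r(K) < 1`, `b ≥ 0` and `φ(t) ≤ at + b` for `t ≥ 0`. -/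
theorem fixedPoint_exists_unique_of_specRad_lt_one {Z : ℕ} (hZ : 0 < Z)
    (K : Matrix (Fin Z) (Fin Z) ℝ) (hK : ∀ i j, 0 ≤ K i j)
    (hr : specRad K < 1)
    (γ : ℝ) (hγ : 0 < γ)
    (a b : ℝ) (ha1 : 1 ≤ a) (har : a * specRad K < 1) (hb : 0 ≤ b)
    (hφ : ∀ t : ℝ, 0 ≤ t → (1 + t ^ (1 / γ)) ^ γ ≤ a * t + b) :
    (∃! x : Fin Z → ℝ, (∀ z, 0 ≤ x z) ∧
      ∀ z, x z = (1 + (K.mulVec x z) ^ (1 / γ)) ^ γ) ∧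
    (∀ x : Fin Z → ℝ, (∀ z, 0 ≤ x z) →
      (∀ z, x z = (1 + (K.mulVec x z) ^ (1 / γ)) ^ γ) →
      ∀ z, 1 ≤ x z ∧
        x z ≤ (1 - a • K)⁻¹.mulVec (fun _ => b) z) := by
  classical
  have ha0 : (0:ℝ) < a := lt_of_lt_of_le zero_lt_one ha1
  obtain ⟨hR, hL, hNN⟩ := FPAux.key_inv hZ K hK ha0 har
  have hb1 : (1:ℝ) ≤ b := by
    have h := hφ 0 le_rfl
    rw [Real.zero_rpow (by positivity : (1:ℝ)/γ ≠ 0)] at h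
    simpa using h
  set M : Fin Z → ℝ := (1 - a • K)⁻¹.mulVec (fun _ => b) with hMdef
  have hmulnn : ∀ v : Fin Z → ℝ, (∀ z, 0 ≤ v z) → ∀ z, 0 ≤ K.mulVec v z := by
    intro v hv z
    simp only [Matrix.mulVec, dotProduct]
    exact Finset.sum_nonneg fun k _ => mul_nonneg (hK z k) (hv k)
  have hmulmono : ∀ u v : Fin Z → ℝ, (∀ z, u z ≤ v z) → ∀ z, K.mulVec u z ≤ K.mulVec v z := by
    intro u v huv z
    simp only [Matrix.mulVec, dotProduct]
    exact Finset.sum_le_sum fun k _ => mul_le_mul_of_nonneg_left (huv k) (hK z k)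
  have hinvmono : ∀ u v : Fin Z → ℝ, (∀ z, u z ≤ v z) →
      ∀ z, (1 - a • K)⁻¹.mulVec u z ≤ (1 - a • K)⁻¹.mulVec v z := by
    intro u v huv z
    simp only [Matrix.mulVec, dotProduct]
    exact Finset.sum_le_sum fun k _ => mul_le_mul_of_nonneg_left (huv k) (hNN z k)
  have hMnn : ∀ z, 0 ≤ M z := by
    intro z
    rw [hMdef]
    simp only [Matrix.mulVec, dotProduct]
    exact Finset.sum_nonneg fun k _ => mul_nonneg (hNN z k) hb
  have hMeq : ∀ z, M z = a * K.mulVec M z + b := by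
    have h5 : (1 - a • K).mulVec M = (fun _ => b) := by
      rw [hMdef, Matrix.mulVec_mulVec, hR, Matrix.one_mulVec]
    intro z
    have h6 := congrFun h5 z
    rw [Matrix.sub_mulVec, Matrix.one_mulVec, Matrix.smul_mulVec] at h6
    simp only [Pi.sub_apply, Pi.smul_apply, smul_eq_mul] at h6
    linarith
  have hM1 : ∀ z, 1 ≤ M z := by
    intro z
    have h := hMeq z
    have h2 := hmulnn M hMnn z
    nlinarith
  have hbound : ∀ x : Fin Z → ℝ, (∀ z, 0 ≤ x z) →
      (∀ z, x z = (1 + (K.mulVec x z) ^ (1 / γ)) ^ γ) →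
      ∀ z, 1 ≤ x z ∧ x z ≤ M z := by
    intro x hx hfix
    have hKx : ∀ z, 0 ≤ K.mulVec x z := hmulnn x hx
    have h1 : ∀ z, 1 ≤ x z := fun z => by
      rw [hfix z]; exact phi_one_le hγ (hKx z)
    refine fun z => ⟨h1 z, ?_⟩
    have hub : ∀ w, (1 - a • K).mulVec x w ≤ b := by
      intro w
      rw [Matrix.sub_mulVec, Matrix.one_mulVec, Matrix.smul_mulVec]
      simp only [Pi.sub_apply, Pi.smul_apply, smul_eq_mul]
      have h2 := hφ (K.mulVec x w) (hKx w)
      rw [← hfix w] at h2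
      linarith
    have hxe : x = (1 - a • K)⁻¹.mulVec ((1 - a • K).mulVec x) := by
      rw [Matrix.mulVec_mulVec, hL, Matrix.one_mulVec]
    calc x z = (1 - a • K)⁻¹.mulVec ((1 - a • K).mulVec x) z := by rw [← hxe]
      _ ≤ (1 - a • K)⁻¹.mulVec (fun _ => b) z := hinvmono _ _ hub z
      _ = M z := rfl
  -- existence via Knaster–Tarski
  set l : Fin Z → ℝ := fun _ => 1 with hldef
  have hlM : l ≤ M := fun z => hM1 z
  haveI : Fact (l ≤ M) := ⟨hlM⟩
  have hmapsto : ∀ p : Fin Z → ℝ, l ≤ p → p ≤ M →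
      (fun z => (1 + (K.mulVec p z) ^ (1 / γ)) ^ γ) ∈ Set.Icc l M := by
    intro p hlp hpM
    have hpnn : ∀ z, 0 ≤ p z := fun z => le_trans zero_le_one (hlp z)
    constructor
    · intro z
      exact phi_one_le hγ (hmulnn p hpnn z)
    · intro z
      calc (1 + (K.mulVec p z) ^ (1/γ)) ^ γ
          ≤ (1 + (K.mulVec M z) ^ (1/γ)) ^ γ :=
            phi_mono hγ (hmulnn p hpnn z) (hmulmono p M (fun w => hpM w) z)
        _ ≤ a * K.mulVec M z + b := hφ _ (hmulnn M hMnn z)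
        _ = M z := (hMeq z).symm
  let Φ : Set.Icc l M →o Set.Icc l M :=
    { toFun := fun p => ⟨fun z => (1 + (K.mulVec p.1 z) ^ (1 / γ)) ^ γ,
        hmapsto p.1 p.2.1 p.2.2⟩
      monotone' := by
        intro p q hpq
        have hpnn : ∀ z, 0 ≤ p.1 z := fun z => le_trans zero_le_one (p.2.1 z)
        intro z
        exact phi_mono hγ (hmulnn p.1 hpnn z) (hmulmono p.1 q.1 (fun w => hpq w) z) }
  set x0 : Set.Icc l M := OrderHom.lfp Φ with hx0def
  have hfix0 : Φ x0 = x0 := OrderHom.map_lfp Φ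
  have hfixfun : ∀ z, (x0 : Fin Z → ℝ) z = (1 + (K.mulVec (x0 : Fin Z → ℝ) z) ^ (1 / γ)) ^ γ := by
    intro z
    exact (congrFun (congrArg Subtype.val hfix0) z).symm
  have hx0nn : ∀ z, 0 ≤ (x0 : Fin Z → ℝ) z := fun z =>
    le_trans zero_le_one (x0.2.1 z)
  refine ⟨⟨(x0 : Fin Z → ℝ), ⟨hx0nn, hfixfun⟩, ?_⟩, fun x hx hfix z => hbound x hx hfix z⟩
  rintro y ⟨hynn, hyfix⟩
  have hy1 : ∀ z, 1 ≤ y z := fun z => (hbound y hynn hyfix z).1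
  have hx01 : ∀ z, 1 ≤ (x0 : Fin Z → ℝ) z := fun z => x0.2.1 z
  funext z
  exact le_antisymm (fixed_le hZ K hK hγ hy1 hx01 hyfix hfixfun z)
    (fixed_le hZ K hK hγ hx01 hy1 hfixfun hyfix z)
end
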